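/- Let H be the gluing of (G,x,y) and (K,u,v), where G and K are cubic bridgeless graphs, xy ∈ E(G) and uv ∈ E(K). If the edge set of H can be covered by k perfect matchings, then the edge set of K can be covered by k perfect matchings; in particular χ'_e(K) ≤ χ'_e(H). -/

import Mathlib

open SimpleGraph

/-- A graph is cubic (3-regular) if every vertex has exactly 3 neighbours. -/
def IsCubic {V : Type*} (G : SimpleGraph V) : Prop :=
  ∀ v : V, (G.neighborSet v).ncard = 3

/-- A graph is bridgeless if it has no cut-edge. -/
def IsBridgeless {V : Type*} (G : SimpleGraph V) : Prop :=
  ∀ e : Sym2 V, ¬ G.IsBridge e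

/-- The edge set of `G` can be covered by `k` perfect matchings. -/
def CoverByPM {V : Type*} (G : SimpleGraph V) (k : ℕ) : Prop :=
  ∃ M : Fin k → G.Subgraph,
    (∀ i, (M i).IsPerfectMatching) ∧ (⋃ i, (M i).edgeSet) = G.edgeSet

/-- The excessive index of `G`: the least number of perfect matchings needed to
cover the edge set of `G` (`⊤` if there is no such cover). -/
noncomputable def excessiveIndex {V : Type*} (G : SimpleGraph V) : ℕ∞ :=
  sInf {k : ℕ∞ | ∃ n : ℕ, k = n ∧ CoverByPM G n}

/-- `G` has a proper edge colouring with `n` colours. -/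
def ProperEdgeColorable {V : Type*} (G : SimpleGraph V) (n : ℕ) : Prop :=
  ∃ c : Sym2 V → Fin n, ∀ e ∈ G.edgeSet, ∀ f ∈ G.edgeSet,
    e ≠ f → (∃ v : V, v ∈ e ∧ v ∈ f) → c e ≠ c f

/-- The set of edges of `G` with one end-vertex in `A` and the other in `B`. -/
def edgesBetween {V : Type*} (G : SimpleGraph V) (A B : Set V) : Set (Sym2 V) :=
  {e | ∃ a b, G.Adj a b ∧ a ∈ A ∧ b ∈ B ∧ e = s(a, b)}

/-- The set of edges of `G` with exactly one end-vertex in `A`. -/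
def edgeBoundary {V : Type*} (G : SimpleGraph V) (A : Set V) : Set (Sym2 V) :=
  edgesBetween G A Aᶜ

/-- The subgraph induced on `A` contains a cycle. -/
def HasCycleOn {V : Type*} (G : SimpleGraph V) (A : Set V) : Prop :=
  ¬ (G.induce A).IsAcyclic

/-- `G` is cyclically `k`-edge-connected: there is no edge-cut with fewer than `k`
edges separating two parts each containing a cycle. -/
def CyclicallyEdgeConnected {V : Type*} (G : SimpleGraph V) (k : ℕ) : Prop :=
  ∀ A : Set V, HasCycleOn G A → HasCycleOn G Aᶜ → k ≤ (edgeBoundary G A).ncard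

/-- A snark: a cubic, cyclically 4-edge-connected graph of girth at least five
that is not 3-edge-colourable. -/
def IsSnark {V : Type*} (G : SimpleGraph V) : Prop :=
  IsCubic G ∧ CyclicallyEdgeConnected G 4 ∧ 5 ≤ G.girth ∧ ¬ ProperEdgeColorable G 3

/-- The gluing of `(G, x, y)` and `(H, u, v)`: remove the edges `x — y` and
`u — v`, and join `x` to `u` and `y` to `v`. -/
def gluing {V W : Type*} (G : SimpleGraph V) (H : SimpleGraph W) (x y : V) (u v : W) :
    SimpleGraph (V ⊕ W) :=
  SimpleGraph.fromRel (fun p q =>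
    (∃ a b : V, G.Adj a b ∧ s(a, b) ≠ s(x, y) ∧ p = Sum.inl a ∧ q = Sum.inl b) ∨
    (∃ a b : W, H.Adj a b ∧ s(a, b) ≠ s(u, v) ∧ p = Sum.inr a ∧ q = Sum.inr b) ∨
    (p = Sum.inl x ∧ q = Sum.inr u) ∨ (p = Sum.inl y ∧ q = Sum.inr v))

/-- If the gluing of `(G,x,y)` and `(K,u,v)` can be covered by
`k` perfect matchings, then so can `K`; in particular `χ'ₑ(K) ≤ χ'ₑ(H)` for the
glued graph `H`. -/
lemma aux_even_card {V : Type} [Fintype V] (G : SimpleGraph V)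
    (h : ∀ w, (G.neighborSet w).ncard = 3) : Even (Fintype.card V) := by
  classical
  have h2 : ∀ w, G.degree w = 3 := by
    intro w
    rw [← h w, SimpleGraph.degree, Set.ncard_eq_toFinset_card']
    rfl
  have hh := G.sum_degrees_eq_twice_card_edges
  simp only [h2, Finset.sum_const, smul_eq_mul, Finset.card_univ] at hh
  have he : Even (Fintype.card V * 3) := ⟨G.edgeFinset.card, by omega⟩
  rcases Nat.even_mul.mp he with h | h
  · exact h
  · simp [Nat.even_iff] at h

variable {V W : Type} (G : SimpleGraph V) (K : SimpleGraph W) (x y : V) (u v : W)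

lemma glue_adj_inr {a b : W} :
    (gluing G K x y u v).Adj (Sum.inr a) (Sum.inr b) ↔ K.Adj a b ∧ s(a, b) ≠ s(u, v) := by
  simp only [gluing, fromRel_adj, ne_eq, Sum.inr.injEq, Sum.inl.injEq, and_false, false_and,
    exists_false, or_false, false_or, reduceCtorEq]
  constructor
  · rintro ⟨hne, ⟨a', b', h1, h2, rfl, rfl⟩ | ⟨a', b', h1, h2, rfl, rfl⟩⟩
    · exact ⟨h1, h2⟩
    · exact ⟨h1.symm, by rwa [Sym2.eq_swap]⟩
  · rintro ⟨h1, h2⟩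
    exact ⟨by rintro rfl; exact h1.ne rfl, Or.inl ⟨a, b, h1, h2, rfl, rfl⟩⟩

lemma glue_adj_cross {a : V} {b : W} :
    (gluing G K x y u v).Adj (Sum.inl a) (Sum.inr b) ↔ (a = x ∧ b = u) ∨ (a = y ∧ b = v) := by
  simp only [gluing, fromRel_adj]
  aesop

/-- restriction of a matching of `H` to the `inl` component, as a subgraph of `⊤`. -/
def inlRestrict {V W : Type*} {H : SimpleGraph (V ⊕ W)} (M : H.Subgraph) :
    (⊤ : SimpleGraph V).Subgraph where
  verts := {a | ∃ b, M.Adj (Sum.inl a) (Sum.inl b)}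
  Adj a b := M.Adj (Sum.inl a) (Sum.inl b)
  adj_sub := fun {a b} h => by
    have hne := (M.adj_sub h).ne
    simp only [top_adj]
    rintro rfl
    exact hne rfl
  edge_vert := fun h => ⟨_, h⟩
  symm := ⟨fun a b h => h.symm⟩

lemma parity_core {V W : Type} [Fintype V] {H : SimpleGraph (V ⊕ W)} {x y : V} {u v : W}
    (hEV : Even (Fintype.card V)) (hxy : x ≠ y)
    (h2 : ∀ (a : V) (w : W), H.Adj (Sum.inl a) (Sum.inr w) → (a = x ∧ w = u) ∨ (a = y ∧ w = v))
    {M : H.Subgraph} (hM : M.IsPerfectMatching)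
    (hC : M.Adj (Sum.inl x) (Sum.inr u)) (hD : ¬ M.Adj (Sum.inl y) (Sum.inr v)) : False := by
  classical
  have hNm : (inlRestrict M).IsMatching := by
    rintro a ⟨b, hb⟩
    exact ⟨b, hb, fun b' hb' => Sum.inl_injective ((hM.1 (hM.2 _)).unique hb' hb)⟩
  have hv : (inlRestrict M).verts = {x}ᶜ := by
    ext a
    simp only [inlRestrict, Set.mem_setOf_eq, Set.mem_compl_iff, Set.mem_singleton_iff]
    constructor
    · rintro ⟨b, hb⟩ rfl
      have := (hM.1 (hM.2 _)).unique hb hC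
      simp at this
    · intro ha
      obtain ⟨z, hz, -⟩ := hM.1 (hM.2 (Sum.inl a))
      cases z with
      | inl b => exact ⟨b, hz⟩
      | inr w =>
        rcases h2 a w (M.adj_sub hz) with ⟨rfl, rfl⟩ | ⟨rfl, rfl⟩
        · exact absurd rfl ha
        · exact absurd hz hD
  haveI : Fintype (inlRestrict M).verts := Set.Finite.fintype (Set.toFinite _)
  have heven : Even (inlRestrict M).verts.ncard := by
    rw [Set.ncard_eq_toFinset_card']
    exact hNm.even_card
  rw [hv] at heven
  have h1 : ({x} : Set V).ncard + ({x}ᶜ : Set V).ncard = Nat.card V :=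
    Set.ncard_add_ncard_compl _
  simp only [Set.ncard_singleton, Nat.card_eq_fintype_card] at h1
  obtain ⟨c1, hc1⟩ := hEV
  obtain ⟨c2, hc2⟩ := heven
  omega

lemma glue_cross_iff [Fintype V] (hEV : Even (Fintype.card V)) (hxy : G.Adj x y)
    {M : (gluing G K x y u v).Subgraph} (hM : M.IsPerfectMatching) :
    M.Adj (Sum.inl x) (Sum.inr u) ↔ M.Adj (Sum.inl y) (Sum.inr v) := by
  have h2 : ∀ (a : V) (w : W), (gluing G K x y u v).Adj (Sum.inl a) (Sum.inr w) →
      (a = x ∧ w = u) ∨ (a = y ∧ w = v) := fun a w h => (glue_adj_cross G K x y u v).mp h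
  constructor
  · intro hC
    by_contra hD
    exact parity_core hEV hxy.ne h2 hM hC hD
  · intro hD
    by_contra hC
    exact parity_core hEV hxy.ne.symm (fun a w h => (h2 a w h).symm) hM hD hC

/-- the matching induced on `K` by a perfect matching of the gluing -/
def glueRestrict (huv : K.Adj u v) (M : (gluing G K x y u v).Subgraph) : K.Subgraph where
  verts := Set.univ
  Adj a b := M.Adj (Sum.inr a) (Sum.inr b) ∨
    (M.Adj (Sum.inl x) (Sum.inr u) ∧ ((a = u ∧ b = v) ∨ (a = v ∧ b = u)))
  adj_sub := by
    rintro a b (h | ⟨-, ⟨rfl, rfl⟩ | ⟨rfl, rfl⟩⟩)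
    · exact ((glue_adj_inr G K x y u v).mp (M.adj_sub h)).1
    · exact huv
    · exact huv.symm
  edge_vert := fun _ => Set.mem_univ _
  symm := by
    constructor
    rintro a b (h | ⟨hc, h⟩)
    · exact Or.inl h.symm
    · exact Or.inr ⟨hc, by tauto⟩

lemma glueRestrict_isPM [Fintype V] (hEV : Even (Fintype.card V)) (hxy : G.Adj x y)
    (huv : K.Adj u v) {M : (gluing G K x y u v).Subgraph} (hM : M.IsPerfectMatching) :
    (glueRestrict G K x y u v huv M).IsPerfectMatching := by
  constructor
  · rintro a -
    obtain ⟨z, hz, huniq⟩ := hM.1 (hM.2 (Sum.inr a))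
    cases z with
    | inr b =>
      refine ⟨b, Or.inl hz, ?_⟩
      rintro b' (h | ⟨hc, ⟨he1, he2⟩ | ⟨he1, he2⟩⟩)
      · exact Sum.inr_injective (huniq _ h)
      · exact absurd (huniq _ (by rw [he1]; exact hc.symm)) (by simp)
      · have hD := (glue_cross_iff G K x y u v hEV hxy hM).mp hc
        exact absurd (huniq _ (by rw [he1]; exact hD.symm)) (by simp)
    | inl c =>
      have hcr := (glue_adj_cross G K x y u v).mp ((M.adj_sub hz).symm)
      rcases hcr with ⟨hc1, hc2⟩ | ⟨hc1, hc2⟩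
      · have hC : M.Adj (Sum.inl x) (Sum.inr u) := by rw [hc1, hc2] at hz; exact hz.symm
        refine ⟨v, Or.inr ⟨hC, Or.inl ⟨hc2, rfl⟩⟩, ?_⟩
        rintro b' (h | ⟨-, ⟨-, he⟩ | ⟨he1, he2⟩⟩)
        · exact absurd (huniq _ h) (by rw [hc1]; simp)
        · exact he
        · exfalso; exact huv.ne (by rw [← hc2]; exact he1)
      · have hD : M.Adj (Sum.inl y) (Sum.inr v) := by rw [hc1, hc2] at hz; exact hz.symm
        have hC := (glue_cross_iff G K x y u v hEV hxy hM).mpr hD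
        refine ⟨u, Or.inr ⟨hC, Or.inr ⟨hc2, rfl⟩⟩, ?_⟩
        rintro b' (h | ⟨-, ⟨he1, he2⟩ | ⟨-, he⟩⟩)
        · exact absurd (huniq _ h) (by rw [hc1]; simp)
        · exfalso; exact huv.ne (by rw [← he1]; exact hc2)
        · exact he
  · exact fun a => Set.mem_univ _

theorem gluing_coverByPM {V W : Type} [Fintype V] [Fintype W]
    (G : SimpleGraph V) (K : SimpleGraph W) (x y : V) (u v : W)
    (hGc : IsCubic G) (hGb : IsBridgeless G) (hKc : IsCubic K) (hKb : IsBridgeless K)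
    (hxy : G.Adj x y) (huv : K.Adj u v) :
    (∀ k : ℕ, CoverByPM (gluing G K x y u v) k → CoverByPM K k) ∧
    excessiveIndex K ≤ excessiveIndex (gluing G K x y u v) := by
  have hEV : Even (Fintype.card V) := aux_even_card G hGc
  have main : ∀ k : ℕ, CoverByPM (gluing G K x y u v) k → CoverByPM K k := by
    rintro k ⟨M, hPM, hcov⟩
    refine ⟨fun i => glueRestrict G K x y u v huv (M i),
      fun i => glueRestrict_isPM G K x y u v hEV hxy huv (hPM i), ?_⟩
    apply Set.Subset.antisymm
    · exact Set.iUnion_subset fun i => Subgraph.edgeSet_subset _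
    · intro e he
      induction e using Sym2.ind with
      | _ a b =>
        rw [mem_edgeSet] at he
        by_cases hsab : s(a, b) = s(u, v)
        · have hcr : s(Sum.inl x, Sum.inr u) ∈ (gluing G K x y u v).edgeSet := by
            rw [mem_edgeSet, glue_adj_cross]
            exact Or.inl ⟨rfl, rfl⟩
          rw [← hcov, Set.mem_iUnion] at hcr
          obtain ⟨i, hi⟩ := hcr
          rw [Subgraph.mem_edgeSet] at hi
          refine Set.mem_iUnion.mpr ⟨i, ?_⟩
          rw [hsab, Subgraph.mem_edgeSet]
          exact Or.inr ⟨hi, Or.inl ⟨rfl, rfl⟩⟩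
        · have hcr : s(Sum.inr a, Sum.inr b) ∈ (gluing G K x y u v).edgeSet := by
            rw [mem_edgeSet, glue_adj_inr]
            exact ⟨he, hsab⟩
          rw [← hcov, Set.mem_iUnion] at hcr
          obtain ⟨i, hi⟩ := hcr
          rw [Subgraph.mem_edgeSet] at hi
          refine Set.mem_iUnion.mpr ⟨i, ?_⟩
          rw [Subgraph.mem_edgeSet]
          exact Or.inl hi
  refine ⟨main, sInf_le_sInf ?_⟩
  rintro k ⟨n, rfl, h⟩
  exact ⟨n, rfl, main n h⟩
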